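/- Let m ≥ 2 be an even integer and n ≥ 2, let A be a Hankel tensor of order m and dimension n with generating vector v, and let P be its associated plane tensor. Then P is positive semi-definite (i.e., P y^{(n−1)m} ≥ 0 for all y ∈ ℝ²) if and only if A is Vandermonde positive semi-definite. -/

import Mathlib

open Finset

/-- `A x^m = ∑_{i_1,…,i_m} a_{i_1⋯i_m} x_{i_1}⋯x_{i_m}` for an order `m` dimension `n` tensor. -/
noncomputable def tApply (m n : ℕ) (a : (Fin m → Fin n) → ℝ) (x : Fin n → ℝ) : ℝ :=
  ∑ i : Fin m → Fin n, a i * ∏ j, x (i j)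

/-- An (even order) tensor is positive semi-definite if `A x^m ≥ 0` for all `x`. -/
def IsPSD (m n : ℕ) (a : (Fin m → Fin n) → ℝ) : Prop :=
  ∀ x : Fin n → ℝ, 0 ≤ tApply m n a x

/-- The Hankel tensor of order `m` and dimension `n` generated by `v`:
entries `a_{i_1⋯i_m} = v_{i_1+⋯+i_m-m}` (indices here are 0-based). -/
def hankelT (m n : ℕ) (v : ℕ → ℝ) : (Fin m → Fin n) → ℝ :=
  fun i => v (∑ j, (i j : ℕ))

/-- `s(k,m,n)`: the number of index tuples `(i_1,…,i_m) ∈ [n]^m` with `i_1+⋯+i_m-m = k`. -/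
def sCount (m n k : ℕ) : ℕ :=
  (Finset.univ.filter (fun i : Fin m → Fin n => ∑ j, (i j : ℕ) = k)).card

/-- A tensor is Vandermonde positive semi-definite if `A u^m ≥ 0` for every Vandermonde
vector `u = (1, μ, μ², …, μ^{n-1})`. -/
def IsVPSD (m n : ℕ) (a : (Fin m → Fin n) → ℝ) : Prop :=
  ∀ μ : ℝ, 0 ≤ tApply m n a (fun l => μ ^ (l : ℕ))

/-- The associated plane tensor of the Hankel tensor generated by `v`:
an order `(n-1)m` dimension `2` tensor with entries `s(k,m,n)·v_k / binom((n-1)m, k)`. -/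
noncomputable def planeT (m n : ℕ) (v : ℕ → ℝ) : (Fin ((n - 1) * m) → Fin 2) → ℝ :=
  fun i => (sCount m n (∑ j, (i j : ℕ)) : ℝ) * v (∑ j, (i j : ℕ)) /
    (Nat.choose ((n - 1) * m) (∑ j, (i j : ℕ)) : ℝ)

lemma sum_val_le (m n : ℕ) (i : Fin m → Fin n) : ∑ j, (i j : ℕ) ≤ (n - 1) * m := by
  calc ∑ j, (i j : ℕ) ≤ (Finset.univ : Finset (Fin m)).card • (n - 1) := by
        apply Finset.sum_le_card_nsmul
        intro j _
        have := (i j).isLt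
        omega
    _ = (n - 1) * m := by simp [mul_comm]

lemma fiber_sum (m n : ℕ) (f : ℕ → ℝ) :
    ∑ i : Fin m → Fin n, f (∑ j, (i j : ℕ)) =
      ∑ k ∈ Finset.range ((n - 1) * m + 1), (sCount m n k : ℝ) * f k := by
  rw [← Finset.sum_fiberwise_of_maps_to (g := fun i : Fin m → Fin n => ∑ j, (i j : ℕ))
      (t := Finset.range ((n - 1) * m + 1))
      (fun i _ => Finset.mem_range.mpr (Nat.lt_succ_of_le (sum_val_le m n i)))
      (fun i => f (∑ j, (i j : ℕ)))]
  refine Finset.sum_congr rfl fun k _ => ?_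
  have h : ∀ i ∈ Finset.univ.filter (fun i : Fin m → Fin n => ∑ j, (i j : ℕ) = k),
      f (∑ j, (i j : ℕ)) = f k := fun i hi => by rw [(Finset.mem_filter.mp hi).2]
  rw [Finset.sum_congr rfl h, Finset.sum_const, nsmul_eq_mul, sCount]

lemma card_sum_eq (N k : ℕ) : sCount N 2 k = N.choose k := by
  have hval : ∀ a : Fin 2, (a : ℕ) = if a = 1 then 1 else 0 := by decide
  have hsum : ∀ i : Fin N → Fin 2,
      ∑ j, (i j : ℕ) = (Finset.univ.filter (fun j => i j = 1)).card := by
    intro i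
    rw [Finset.card_filter]
    exact Finset.sum_congr rfl fun j _ => hval (i j)
  rw [sCount, show N.choose k = ((Finset.univ : Finset (Fin N)).card).choose k by simp,
    ← Finset.card_powersetCard]
  · apply Finset.card_bij (fun i _ => Finset.univ.filter (fun j => i j = 1))
    · intro i hi
      rw [Finset.mem_powersetCard_univ, ← hsum i]
      exact (Finset.mem_filter.mp hi).2
    · intro i₁ h₁ i₂ h₂ heq
      funext j
      have : j ∈ Finset.univ.filter (fun j => i₁ j = 1) ↔
          j ∈ Finset.univ.filter (fun j => i₂ j = 1) := by rw [heq]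
      simp only [Finset.mem_filter, Finset.mem_univ, true_and] at this
      revert this
      have : ∀ a b : Fin 2, ((a = 1) ↔ (b = 1)) → a = b := by decide
      exact this _ _
    · intro s hs
      refine ⟨fun j => if j ∈ s then 1 else 0, ?_, ?_⟩
      · simp only [Finset.mem_filter, Finset.mem_univ, true_and]
        rw [hsum]
        rw [Finset.mem_powersetCard_univ] at hs
        rw [← hs]
        congr 1
        ext j
        simp only [Finset.mem_filter, Finset.mem_univ, true_and]
        split <;> simp_all
      · ext j
        simp only [Finset.mem_filter, Finset.mem_univ, true_and]
        split <;> simp_all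

lemma hankel_apply (m n : ℕ) (v : ℕ → ℝ) (μ : ℝ) :
    tApply m n (hankelT m n v) (fun l => μ ^ (l : ℕ)) =
      ∑ k ∈ Finset.range ((n - 1) * m + 1), (sCount m n k : ℝ) * (v k * μ ^ k) := by
  rw [← fiber_sum m n (fun k => v k * μ ^ k)]
  unfold tApply hankelT
  exact Finset.sum_congr rfl fun i _ => by rw [Finset.prod_pow_eq_pow_sum]

lemma plane_apply (m n : ℕ) (v : ℕ → ℝ) (μ : ℝ) :
    tApply ((n - 1) * m) 2 (planeT m n v) (fun j => μ ^ (j : ℕ)) =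
      ∑ k ∈ Finset.range ((n - 1) * m + 1), (sCount m n k : ℝ) * (v k * μ ^ k) := by
  have h1 : tApply ((n - 1) * m) 2 (planeT m n v) (fun j => μ ^ (j : ℕ)) =
      ∑ i : Fin ((n - 1) * m) → Fin 2,
        (fun k => (sCount m n k : ℝ) * v k / (Nat.choose ((n - 1) * m) k : ℝ) * μ ^ k)
          (∑ j, (i j : ℕ)) := by
    unfold tApply planeT
    exact Finset.sum_congr rfl fun i _ => by rw [Finset.prod_pow_eq_pow_sum]
  rw [h1, fiber_sum ((n - 1) * m) 2
    (fun k => (sCount m n k : ℝ) * v k / (Nat.choose ((n - 1) * m) k : ℝ) * μ ^ k)]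
  rw [show (2 - 1) * ((n - 1) * m) = (n - 1) * m by omega]
  refine Finset.sum_congr rfl fun k hk => ?_
  have hkle : k ≤ (n - 1) * m := by
    have := Finset.mem_range.mp hk; omega
  rw [card_sum_eq]
  have hc : (Nat.choose ((n - 1) * m) k : ℝ) ≠ 0 := by
    exact_mod_cast (Nat.choose_pos hkle).ne'
  field_simp

lemma tApply_cont (m n : ℕ) (a : (Fin m → Fin n) → ℝ) :
    Continuous (fun x => tApply m n a x) := by
  unfold tApply
  exact continuous_finset_sum _ fun i _ =>
    continuous_const.mul (continuous_finset_prod _ fun j _ => continuous_apply _)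

lemma tApply_smul (m n : ℕ) (a : (Fin m → Fin n) → ℝ) (c : ℝ) (x : Fin n → ℝ) :
    tApply m n a (fun j => c * x j) = c ^ m * tApply m n a x := by
  unfold tApply
  rw [Finset.mul_sum]
  refine Finset.sum_congr rfl fun i _ => ?_
  rw [Finset.prod_mul_distrib, Finset.prod_const, Finset.card_univ, Fintype.card_fin]
  ring

/-- Theorem 4.1: for an even order Hankel tensor, the associated plane tensor is
positive semi-definite iff the Hankel tensor is Vandermonde positive semi-definite. -/
theorem stmt_8 (m n : ℕ) (hm : 2 ≤ m) (hme : Even m) (hn : 2 ≤ n) (v : ℕ → ℝ) :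
    (∀ y : Fin 2 → ℝ, 0 ≤ tApply ((n - 1) * m) 2 (planeT m n v) y)
      ↔ IsVPSD m n (hankelT m n v) := by
  constructor
  · intro h μ
    rw [hankel_apply, ← plane_apply]
    exact h _
  · intro h
    have hEven : Even ((n - 1) * m) := hme.mul_left _
    have hpos : ∀ z : Fin 2 → ℝ, z 0 ≠ 0 → 0 ≤ tApply ((n - 1) * m) 2 (planeT m n v) z := by
      intro z hz
      have hzeq : (fun j : Fin 2 => z 0 * (z 1 / z 0) ^ (j : ℕ)) = z := by
        funext j
        fin_cases j
        · simp
        · show z 0 * (z 1 / z 0) ^ 1 = z 1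
          field_simp
      calc (0 : ℝ) ≤ (z 0) ^ ((n - 1) * m) *
            tApply ((n - 1) * m) 2 (planeT m n v) (fun j => (z 1 / z 0) ^ (j : ℕ)) := by
            apply mul_nonneg (hEven.pow_nonneg _)
            rw [plane_apply, ← hankel_apply]
            exact h _
        _ = tApply ((n - 1) * m) 2 (planeT m n v) z := by rw [← tApply_smul, hzeq]
    intro y
    by_cases hy : y 0 = 0
    · set F : ℝ → ℝ := fun t => tApply ((n - 1) * m) 2 (planeT m n v) (Function.update y 0 t)
        with hFdef
      have hg : Continuous (fun t : ℝ => Function.update y 0 t) := by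
        refine continuous_pi fun j => ?_
        rcases eq_or_ne j 0 with rfl | hj
        · simpa using continuous_id'
        · simpa [Function.update_of_ne hj] using continuous_const
      have hF : Continuous F := (tApply_cont _ _ _).comp hg
      have h0 : F 0 = tApply ((n - 1) * m) 2 (planeT m n v) y := by
        rw [hFdef]
        simp only [← hy, Function.update_eq_self]
      rw [← h0]
      refine ge_of_tendsto (x := nhdsWithin 0 {(0:ℝ)}ᶜ)
        (hF.continuousAt.continuousWithinAt) ?_
      exact Filter.eventually_of_mem self_mem_nhdsWithin fun t ht =>
        hpos _ (by simpa using ht)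
    · exact hpos y hy
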